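/- Let (V, ⟨,⟩) be a 2n-dimensional complex symplectic vector space and let M : Cⁿ → V be a linear map of rank ≥ n-1 whose image is isotropic. Then M_lag (the variety of maps with isotropic image) is smooth at M, i.e., the n(n-1)/2 defining equations ⟨m_k, m_l⟩ = 0 have linearly independent differentials at M. -/

import Mathlib

/-!
STATEMENT 3: Let `(V, B)` be a `2n`-dimensional complex symplectic vector space
(`V = ℂ²ⁿ`) and `M : ℂⁿ → V` a linear map of rank `≥ n - 1` with isotropic image.
Then `M_lag` is smooth at `M`: the differentials at `M` of the `n(n-1)/2` defining
equations `q_{kl}(m) = B (m e_k) (m e_l)` (for `k < l`), namely the linear forms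
`H ↦ B (H e_k) (M e_l) + B (M e_k) (H e_l)` on `Hom(ℂⁿ, V)`, are linearly
independent.
-/

theorem stmt_3 (n : ℕ)
    (B : LinearMap.BilinForm ℂ (Fin (2 * n) → ℂ))
    (halt : ∀ v, B v v = 0)
    (hnondeg : ∀ v, (∀ w, B v w = 0) → v = 0)
    (M : (Fin n → ℂ) →ₗ[ℂ] (Fin (2 * n) → ℂ))
    (hrank : n - 1 ≤ Module.finrank ℂ (LinearMap.range M))
    (hiso : ∀ x y : Fin n → ℂ, B (M x) (M y) = 0)
    (D : {q : Fin n × Fin n // q.1 < q.2} →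
      ((Fin n → ℂ) →ₗ[ℂ] (Fin (2 * n) → ℂ)) →ₗ[ℂ] ℂ)
    (hD : ∀ q, D q =
      ((B.flip (M (Pi.single q.1.2 1))).comp
          (LinearMap.applyₗ (Pi.single q.1.1 1))) +
      ((B (M (Pi.single q.1.1 1))).comp
          (LinearMap.applyₗ (Pi.single q.1.2 1)))) :
    LinearIndependent ℂ D := by
  classical
  rw [Fintype.linearIndependent_iff]
  intro c hc q0
  -- skew symmetry of B
  have hskew : ∀ v w, B w v = -B v w := by
    intro v w
    have h := halt (v + w)
    simp only [map_add, LinearMap.add_apply] at h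
    rw [halt v, halt w] at h
    linear_combination h
  have hnondeg' : ∀ v, (∀ w, B w v = 0) → v = 0 := by
    intro v h
    refine hnondeg v fun w => ?_
    have h2 : -(B v w) = 0 := by rw [← hskew v w]; exact h w
    exact neg_eq_zero.mp h2
  -- the antisymmetric matrix of coefficients
  set A : Fin n → Fin n → ℂ := fun j l =>
    if h : j < l then c ⟨(j, l), h⟩ else if h : l < j then -c ⟨(l, j), h⟩ else 0 with hA
  have hAlt : ∀ (j l : Fin n) (h : j < l), A j l = c ⟨(j, l), h⟩ := by
    intro j l h; simp [hA, h]
  have hAanti : ∀ j l, A l j = -A j l := by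
    intro j l
    rcases lt_trichotomy j l with h | h | h
    · simp [hA, h, h.not_gt]
    · subst h; simp [hA, lt_irrefl]
    · simp [hA, h, h.not_gt]
  have hAdiag : ∀ j, A j j = 0 := by
    intro j
    simp [hA, lt_irrefl]
  -- main identity: the full double sum vanishes
  have h1 : ∀ H : (Fin n → ℂ) →ₗ[ℂ] (Fin (2 * n) → ℂ),
      ∑ p : Fin n × Fin n,
        A p.1 p.2 * B (H (Pi.single p.1 1)) (M (Pi.single p.2 1)) = 0 := by
    intro H
    have hcH : ∑ q : {q : Fin n × Fin n // q.1 < q.2},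
        c q * (B (H (Pi.single q.1.1 1)) (M (Pi.single q.1.2 1)) +
          B (M (Pi.single q.1.1 1)) (H (Pi.single q.1.2 1))) = 0 := by
      have h0 := LinearMap.congr_fun hc H
      simp only [LinearMap.coe_sum, Finset.sum_apply, LinearMap.smul_apply,
        LinearMap.zero_apply, smul_eq_mul] at h0
      rw [← h0]
      refine Finset.sum_congr rfl fun q _ => ?_
      rw [hD q]
      simp only [LinearMap.add_apply, LinearMap.comp_apply, LinearMap.applyₗ,
        LinearMap.BilinForm.flip_apply, LinearMap.coe_mk, AddHom.coe_mk]
      rfl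
    set F : Fin n × Fin n → ℂ := fun p =>
      A p.1 p.2 * B (H (Pi.single p.1 1)) (M (Pi.single p.2 1)) with hF
    have hsub : (Finset.univ.filter fun p : Fin n × Fin n => p.2 < p.1) ⊆
        (Finset.univ.filter fun p : Fin n × Fin n => ¬ p.1 < p.2) := by
      intro p hp
      simp only [Finset.mem_filter, Finset.mem_univ, true_and] at hp ⊢
      exact not_lt_of_gt hp
    have hsplit : ∑ p : Fin n × Fin n, F p
        = (∑ p ∈ Finset.univ.filter (fun p : Fin n × Fin n => p.1 < p.2), F p)
          + ∑ p ∈ Finset.univ.filter (fun p : Fin n × Fin n => p.2 < p.1), F p := by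
      rw [← Finset.sum_filter_add_sum_filter_not Finset.univ
        (fun p : Fin n × Fin n => p.1 < p.2) F]
      congr 1
      refine (Finset.sum_subset hsub ?_).symm
      intro p hpt hps
      simp only [Finset.mem_filter, Finset.mem_univ, true_and, not_lt] at hpt hps
      have heq : p.1 = p.2 := le_antisymm hps hpt
      simp [hF, ← heq, hAdiag]
    have hswap : ∑ p ∈ Finset.univ.filter (fun p : Fin n × Fin n => p.2 < p.1), F p
        = ∑ p ∈ Finset.univ.filter (fun p : Fin n × Fin n => p.1 < p.2),
            A p.1 p.2 * B (M (Pi.single p.1 1)) (H (Pi.single p.2 1)) := by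
      refine Finset.sum_nbij' (fun p => p.swap) (fun p => p.swap) ?_ ?_ ?_ ?_ ?_
      · intro p hp; simp only [Finset.mem_filter, Finset.mem_univ, true_and] at hp ⊢
        exact hp
      · intro p hp; simp only [Finset.mem_filter, Finset.mem_univ, true_and] at hp ⊢
        exact hp
      · intro p _; rfl
      · intro p _; rfl
      · intro p _
        simp only [hF, Prod.fst_swap, Prod.snd_swap]
        rw [hAanti p.2 p.1, hskew (M (Pi.single p.2 1)) (H (Pi.single p.1 1))]
        ring
    have hsubty : ∑ p ∈ Finset.univ.filter (fun p : Fin n × Fin n => p.1 < p.2),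
        (A p.1 p.2 * (B (H (Pi.single p.1 1)) (M (Pi.single p.2 1)) +
          B (M (Pi.single p.1 1)) (H (Pi.single p.2 1))))
        = ∑ q : {q : Fin n × Fin n // q.1 < q.2},
            A q.1.1 q.1.2 * (B (H (Pi.single q.1.1 1)) (M (Pi.single q.1.2 1)) +
              B (M (Pi.single q.1.1 1)) (H (Pi.single q.1.2 1))) := by
      exact Finset.sum_subtype _ (fun x => by simp) _
    calc ∑ p : Fin n × Fin n, F p
        = ∑ p ∈ Finset.univ.filter (fun p : Fin n × Fin n => p.1 < p.2),
            (A p.1 p.2 * (B (H (Pi.single p.1 1)) (M (Pi.single p.2 1)) +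
              B (M (Pi.single p.1 1)) (H (Pi.single p.2 1)))) := by
          rw [hsplit, hswap, ← Finset.sum_add_distrib]
          refine Finset.sum_congr rfl fun p _ => ?_
          simp only [hF]; ring
      _ = 0 := by
          rw [hsubty, ← hcH]
          refine Finset.sum_congr rfl fun q _ => ?_
          rw [hAlt q.1.1 q.1.2 q.2]
  -- every row of A is in the kernel of M
  have hMA : ∀ j, M (A j) = 0 := by
    intro j
    refine hnondeg' _ fun w => ?_
    have h2 := h1 (LinearMap.smulRight (LinearMap.proj j) w)
    rw [Fintype.sum_prod_type] at h2
    simp only [LinearMap.smulRight_apply, LinearMap.proj_apply, map_smul,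
      LinearMap.smul_apply, smul_eq_mul, Pi.single_apply, mul_ite, ite_mul,
      one_mul, zero_mul, mul_zero, mul_one, Finset.sum_ite_irrel,
      Finset.sum_const_zero, Finset.sum_ite_eq, Finset.mem_univ, if_true] at h2
    have hAj : (A j : Fin n → ℂ) = ∑ l, A j l • (Pi.single l 1 : Fin n → ℂ) := by
      conv_lhs => rw [← Finset.univ_sum_single (A j)]
      refine Finset.sum_congr rfl fun l _ => ?_
      rw [← Pi.single_smul, smul_eq_mul, mul_one]
    rw [hAj, map_sum, map_sum]
    simp only [map_smul, LinearMap.smul_apply, smul_eq_mul]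
    exact h2
  -- conclude
  obtain ⟨⟨k, l⟩, hkl⟩ := q0
  rw [← hAlt k l hkl]
  by_contra hne
  have hker : ∀ j, (A j) ∈ LinearMap.ker M := fun j => hMA j
  have hfr : Module.finrank ℂ (LinearMap.ker M) ≤ 1 := by
    have h := LinearMap.finrank_range_add_finrank_ker M
    have hn : Module.finrank ℂ (Fin n → ℂ) = n := by simp
    omega
  have hli : LinearIndependent ℂ
      ![(⟨A k, hker k⟩ : LinearMap.ker M), ⟨A l, hker l⟩] := by
    rw [LinearIndependent.pair_iff]
    intro s t hst
    have hst' : s • A k + t • A l = 0 := by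
      have h3 := congrArg (Subtype.val) hst
      simpa using h3
    have hl' := congrFun hst' l
    have hk' := congrFun hst' k
    simp only [Pi.add_apply, Pi.smul_apply, smul_eq_mul, Pi.zero_apply] at hl' hk'
    rw [hAdiag l] at hl'
    rw [hAdiag k, hAanti k l] at hk'
    constructor
    · have : s * A k l = 0 := by linear_combination hl'
      rcases mul_eq_zero.mp this with h | h
      · exact h
      · exact absurd h hne
    · have : t * A k l = 0 := by linear_combination -hk'
      rcases mul_eq_zero.mp this with h | h
      · exact h
      · exact absurd h hne
  have hcard := hli.fintype_card_le_finrank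
  simp only [Fintype.card_fin] at hcard
  omega
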